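/- Let (Z,μ) be a probability space. Let σ : Z → ℕ be measurable with σ(z) ≥ 1 for all z and μ(σ > n) ≤ C₁ e^{−dn} for all n ≥ 1, where C₁, d > 0. For each j ∈ ℕ let τ_j : Z → [0,∞) be measurable with μ(τ_j > t) ≤ C₂ t^{−β₀} for all t ≥ 1 and all j, where C₂ > 0 and β₀ > 0. Define φ(z) = Σ_{j=0}^{σ(z)−1} τ_j(z). Then for every γ ∈ (0, β₀) there exists C > 0 such that ∫_Z σ · 1_{{φ > t}} dμ ≤ C t^{−γ} for all t ≥ 1. In particular μ(φ > t) ≤ C t^{−γ} for all t ≥ 1. -/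

import Mathlib

open MeasureTheory
open scoped ENNReal

lemma stmt14_geom (c r : ℝ) (hc : 0 ≤ c) (hr0 : 0 ≤ r) (hr1 : r < 1) :
    ∑' n : ℕ, ENNReal.ofReal (c * r ^ n) = ENNReal.ofReal (c / (1 - r)) := by
  have h1 : ∀ n : ℕ, ENNReal.ofReal (c * r ^ n) = ENNReal.ofReal c * (ENNReal.ofReal r) ^ n := by
    intro n
    rw [ENNReal.ofReal_mul hc, ENNReal.ofReal_pow hr0]
  rw [tsum_congr h1, ENNReal.tsum_mul_left, ENNReal.tsum_geometric]
  have h2 : (1:ℝ≥0∞) - ENNReal.ofReal r = ENNReal.ofReal (1 - r) := by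
    rw [ENNReal.ofReal_sub _ hr0, ENNReal.ofReal_one]
  rw [h2, ← ENNReal.ofReal_inv_of_pos (by linarith), ← ENNReal.ofReal_mul hc, div_eq_mul_inv]

lemma stmt14_natcast {Z : Type*} (σ : Z → ℕ) (z : Z) :
    (σ z : ℝ≥0∞) = ∑' n : ℕ, Set.indicator {w | n < σ w} (1 : Z → ℝ≥0∞) z := by
  rw [tsum_eq_sum (s := Finset.range (σ z)) ?_]
  · simp [Set.indicator_apply, Finset.mem_range]
    rw [Finset.filter_true_of_mem (fun x hx => Finset.mem_range.mp hx), Finset.card_range]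
  · intro n hn
    simp only [Finset.mem_range, not_lt] at hn
    simp [Set.indicator_apply, Set.mem_setOf_eq, not_lt.mpr hn]

set_option maxHeartbeats 1000000 in
theorem stmt14 {Z : Type*} [MeasurableSpace Z] (μ : Measure Z) [IsProbabilityMeasure μ]
    (σ : Z → ℕ) (hσmeas : Measurable σ) (hσ1 : ∀ z, 1 ≤ σ z)
    (C₁ d : ℝ) (hC₁ : 0 < C₁) (hd : 0 < d)
    (hσtail : ∀ n : ℕ, 1 ≤ n →
      μ {z | n < σ z} ≤ ENNReal.ofReal (C₁ * Real.exp (-d * n)))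
    (τ : ℕ → Z → ℝ) (hτmeas : ∀ j, Measurable (τ j)) (hτ0 : ∀ j z, 0 ≤ τ j z)
    (C₂ β₀ : ℝ) (hC₂ : 0 < C₂) (hβ₀ : 0 < β₀)
    (hτtail : ∀ j : ℕ, ∀ t : ℝ, 1 ≤ t →
      μ {z | t < τ j z} ≤ ENNReal.ofReal (C₂ * t ^ (-β₀)))
    (γ : ℝ) (hγ : γ ∈ Set.Ioo 0 β₀) :
    ∃ C : ℝ, 0 < C ∧ ∀ t : ℝ, 1 ≤ t →
      (∫⁻ z in {z | t < ∑ j ∈ Finset.range (σ z), τ j z}, (σ z : ℝ≥0∞) ∂μ)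
          ≤ ENNReal.ofReal (C * t ^ (-γ)) ∧
      μ {z | t < ∑ j ∈ Finset.range (σ z), τ j z} ≤ ENNReal.ofReal (C * t ^ (-γ)) := by
  obtain ⟨hγ0, hγβ⟩ := hγ
  -- improved tail bound with C₂' valid for all positive thresholds
  set C₂' : ℝ := max C₂ 1 with hC₂'def
  have hC₂'1 : (1:ℝ) ≤ C₂' := le_max_right _ _
  have hC₂'pos : (0:ℝ) < C₂' := lt_of_lt_of_le one_pos hC₂'1
  have hτtail' : ∀ j : ℕ, ∀ s : ℝ, 0 < s →
      μ {z | s < τ j z} ≤ ENNReal.ofReal (C₂' * s ^ (-β₀)) := by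
    intro j s hs
    rcases le_or_gt 1 s with h1 | h1
    · refine (hτtail j s h1).trans (ENNReal.ofReal_le_ofReal ?_)
      have h2 : (0:ℝ) ≤ s ^ (-β₀) := Real.rpow_nonneg hs.le _
      have := le_max_left C₂ 1
      nlinarith
    · have h1' : 1 ≤ s ^ (-β₀) :=
        Real.one_le_rpow_of_pos_of_le_one_of_nonpos hs h1.le (by linarith)
      calc μ {z | s < τ j z} ≤ 1 := prob_le_one
        _ = ENNReal.ofReal 1 := by simp
        _ ≤ _ := ENNReal.ofReal_le_ofReal (by nlinarith)
  -- constants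
  set δ : ℝ := (β₀ - γ) / (2 + β₀) with hδdef
  have h2β : (0:ℝ) < 2 + β₀ := by linarith
  have hδpos : 0 < δ := div_pos (by linarith) h2β
  have hδ1 : δ ≤ 1 := by rw [hδdef, div_le_one h2β]; linarith
  have hδeq : δ * (2 + β₀) = β₀ - γ := div_mul_cancel₀ _ h2β.ne'
  set K : ℝ := (γ + 1) / (d * δ) + 2 with hKdef
  have hKpos : 0 < K := by
    have h0 : 0 ≤ (γ + 1) / (d * δ) := div_nonneg (by linarith) (by positivity)
    rw [hKdef]; linarith
  have hKβpos : 0 < K ^ β₀ := Real.rpow_pos_of_pos hKpos _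
  have hed1 : Real.exp (-d) < 1 := by
    rw [Real.exp_lt_one_iff]; linarith
  have hedpos : 0 < 1 - Real.exp (-d) := by linarith
  clear_value C₂' δ K
  have hCpos : 0 < C₂' * K ^ 2 * K ^ β₀ + C₁ * K + C₁ / (1 - Real.exp (-d)) := by
    have h1 : 0 < C₂' * K ^ 2 * K ^ β₀ := mul_pos (mul_pos hC₂'pos (pow_pos hKpos 2)) hKβpos
    have h2 : 0 < C₁ * K := mul_pos hC₁ hKpos
    have h3 : 0 < C₁ / (1 - Real.exp (-d)) := div_pos hC₁ hedpos
    linarith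
  refine ⟨C₂' * K ^ 2 * K ^ β₀ + C₁ * K + C₁ / (1 - Real.exp (-d)), hCpos, ?_⟩
  intro t ht
  have htpos : (0:ℝ) < t := lt_of_lt_of_le one_pos ht
  have hlog0 : 0 ≤ Real.log t := Real.log_nonneg ht
  set S : Set Z := {z | t < ∑ j ∈ Finset.range (σ z), τ j z} with hSdef
  clear_value S
  set N : ℕ := ⌈(γ + 1) / d * Real.log t⌉₊ + 1 with hNdef
  have hN1 : 1 ≤ N := Nat.le_add_left 1 _
  have hNR1 : (1:ℝ) ≤ (N:ℝ) := by exact_mod_cast hN1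
  have hNRpos : (0:ℝ) < N := lt_of_lt_of_le one_pos hNR1
  -- bound on N from above
  have htδ1 : (1:ℝ) ≤ t ^ δ := Real.one_le_rpow ht hδpos.le
  have htδpos : (0:ℝ) < t ^ δ := lt_of_lt_of_le one_pos htδ1
  have hlogle : Real.log t ≤ t ^ δ / δ := by
    have h1 : Real.log (t ^ δ) = δ * Real.log t := Real.log_rpow htpos δ
    have h2 : Real.log (t ^ δ) ≤ t ^ δ - 1 := Real.log_le_sub_one_of_pos htδpos
    rw [le_div_iff₀ hδpos]
    nlinarith
  have hNcast : (N:ℝ) = (⌈(γ + 1) / d * Real.log t⌉₊ : ℝ) + 1 := by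
    rw [hNdef]; push_cast; ring
  clear_value N
  have hNle : (N:ℝ) ≤ K * t ^ δ := by
    have hceil : (⌈(γ + 1) / d * Real.log t⌉₊ : ℝ) < (γ + 1) / d * Real.log t + 1 :=
      Nat.ceil_lt_add_one (by positivity)
    have h1 : (N:ℝ) ≤ (γ + 1) / d * Real.log t + 2 := by rw [hNcast]; linarith
    have h2 : (γ + 1) / d * Real.log t ≤ (γ + 1) / d * (t ^ δ / δ) :=
      mul_le_mul_of_nonneg_left hlogle (by positivity)
    have h3 : (γ + 1) / d * (t ^ δ / δ) = (γ + 1) / (d * δ) * t ^ δ := by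
      field_simp
    have h4 : (2:ℝ) ≤ 2 * t ^ δ := by linarith
    rw [hKdef]; nlinarith
  have hNt : (N:ℝ) ≤ K * t := by
    have h5 : t ^ δ ≤ t := by
      calc t ^ δ ≤ t ^ (1:ℝ) := Real.rpow_le_rpow_of_exponent_le ht hδ1
        _ = t := Real.rpow_one t
    nlinarith
  -- exponential bound
  have hdN : (γ + 1) * Real.log t ≤ d * N := by
    have hceil : (γ + 1) / d * Real.log t ≤ (⌈(γ + 1) / d * Real.log t⌉₊ : ℝ) := Nat.le_ceil _
    have h1 : (γ + 1) * Real.log t = d * ((γ + 1) / d * Real.log t) := by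
      field_simp
    rw [h1, hNcast]
    nlinarith
  have hexpN : Real.exp (-d * N) ≤ t ^ (-(γ + 1)) := by
    rw [Real.rpow_def_of_pos htpos]
    apply Real.exp_le_exp.mpr
    nlinarith
  have htneg : t ^ (-(γ + 1)) ≤ t ^ (-γ) :=
    Real.rpow_le_rpow_of_exponent_le ht (by linarith)
  have hexpN0 : (0:ℝ) ≤ Real.exp (-d * N) := Real.exp_nonneg _
  -- the integral identity
  have hmeasn : ∀ n : ℕ, MeasurableSet {w : Z | n < σ w} := fun n =>
    measurableSet_lt measurable_const hσmeas
  have hI : (∫⁻ z in S, (σ z : ℝ≥0∞) ∂μ) = ∑' n : ℕ, μ ({w | n < σ w} ∩ S) := by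
    calc (∫⁻ z in S, (σ z : ℝ≥0∞) ∂μ)
        = ∫⁻ z in S, ∑' n : ℕ, Set.indicator {w | n < σ w} (1 : Z → ℝ≥0∞) z ∂μ :=
          lintegral_congr fun z => stmt14_natcast σ z
      _ = ∑' n : ℕ, ∫⁻ z in S, Set.indicator {w | n < σ w} (1 : Z → ℝ≥0∞) z ∂μ :=
          lintegral_tsum fun n => (measurable_const.indicator (hmeasn n)).aemeasurable
      _ = ∑' n : ℕ, μ ({w | n < σ w} ∩ S) := by
          refine tsum_congr fun n => ?_
          rw [lintegral_indicator_one (hmeasn n), Measure.restrict_apply (hmeasn n)]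
  -- bound on the "small σ" part
  have hsub : S ∩ {z | σ z ≤ N} ⊆ ⋃ j ∈ Finset.range N, {z | t / N < τ j z} := by
    rintro z ⟨hzS, hzN⟩
    by_contra hcon
    simp only [Set.mem_iUnion, Set.mem_setOf_eq, not_exists, not_lt] at hcon
    have h1 : ∑ j ∈ Finset.range (σ z), τ j z ≤ ∑ j ∈ Finset.range N, τ j z :=
      Finset.sum_le_sum_of_subset_of_nonneg
        (Finset.range_subset_range.mpr hzN) (fun i _ _ => hτ0 i z)
    have h2 : ∑ j ∈ Finset.range N, τ j z ≤ ∑ _j ∈ Finset.range N, (t / N) :=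
      Finset.sum_le_sum fun j hj => hcon j hj
    have h3 : ∑ _j ∈ Finset.range N, (t / N) = N * (t / N) := by
      rw [Finset.sum_const, Finset.card_range, nsmul_eq_mul]
    have h4 : (N:ℝ) * (t / N) = t := mul_div_cancel₀ t hNRpos.ne'
    rw [hSdef, Set.mem_setOf_eq] at hzS
    linarith
  have hP : μ (S ∩ {z | σ z ≤ N}) ≤ ENNReal.ofReal ((N:ℝ) * (C₂' * (t / N) ^ (-β₀))) := by
    calc μ (S ∩ {z | σ z ≤ N})
        ≤ μ (⋃ j ∈ Finset.range N, {z | t / N < τ j z}) := measure_mono hsub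
      _ ≤ ∑ j ∈ Finset.range N, μ {z | t / N < τ j z} := measure_biUnion_finset_le _ _
      _ ≤ ∑ _j ∈ Finset.range N, ENNReal.ofReal (C₂' * (t / N) ^ (-β₀)) :=
          Finset.sum_le_sum fun j _ => hτtail' j _ (div_pos htpos hNRpos)
      _ = (N : ℝ≥0∞) * ENNReal.ofReal (C₂' * (t / N) ^ (-β₀)) := by
          rw [Finset.sum_const, Finset.card_range, nsmul_eq_mul]
      _ = ENNReal.ofReal ((N:ℝ) * (C₂' * (t / N) ^ (-β₀))) := by
          rw [← ENNReal.ofReal_natCast N, ← ENNReal.ofReal_mul (Nat.cast_nonneg N)]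
  have hQ : μ {z | N < σ z} ≤ ENNReal.ofReal (C₁ * Real.exp (-d * N)) := hσtail N hN1
  have htdivpos : (0:ℝ) < t / N := div_pos htpos hNRpos
  have htdivpow0 : (0:ℝ) ≤ (t / N) ^ (-β₀) := Real.rpow_nonneg htdivpos.le _
  -- each term with n < N
  have hterm : ∀ n : ℕ, μ ({w | n < σ w} ∩ S) ≤
      ENNReal.ofReal ((N:ℝ) * (C₂' * (t / N) ^ (-β₀)) + C₁ * Real.exp (-d * N)) := by
    intro n
    have hsub2 : {w | n < σ w} ∩ S ⊆ (S ∩ {z | σ z ≤ N}) ∪ {z | N < σ z} := by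
      rintro z ⟨h1, h2⟩
      rcases le_or_gt (σ z) N with h | h
      · exact Or.inl ⟨h2, h⟩
      · exact Or.inr h
    calc μ ({w | n < σ w} ∩ S) ≤ μ ((S ∩ {z | σ z ≤ N}) ∪ {z | N < σ z}) :=
          measure_mono hsub2
      _ ≤ μ (S ∩ {z | σ z ≤ N}) + μ {z | N < σ z} := measure_union_le _ _
      _ ≤ ENNReal.ofReal ((N:ℝ) * (C₂' * (t / N) ^ (-β₀)))
            + ENNReal.ofReal (C₁ * Real.exp (-d * N)) := add_le_add hP hQ
      _ = _ := by
          rw [← ENNReal.ofReal_add (by positivity) (by positivity)]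
  -- tail terms
  have htail : (∑' n : ℕ, μ ({w | (n + N) < σ w} ∩ S)) ≤
      ENNReal.ofReal (C₁ * Real.exp (-d * N) / (1 - Real.exp (-d))) := by
    have h1 : ∀ n : ℕ, μ ({w | (n + N) < σ w} ∩ S) ≤
        ENNReal.ofReal ((C₁ * Real.exp (-d * N)) * (Real.exp (-d)) ^ n) := by
      intro n
      refine (measure_mono Set.inter_subset_left).trans
        ((hσtail (n + N) (by omega)).trans_eq ?_)
      congr 1
      have h2 : Real.exp (-d * ((n:ℝ) + N)) = Real.exp (-d * N) * Real.exp (-d) ^ n := by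
        rw [← Real.exp_nat_mul, ← Real.exp_add]
        congr 1
        ring
      push_cast
      rw [h2]
      ring
    calc (∑' n : ℕ, μ ({w | (n + N) < σ w} ∩ S))
        ≤ ∑' n : ℕ, ENNReal.ofReal ((C₁ * Real.exp (-d * N)) * (Real.exp (-d)) ^ n) :=
          ENNReal.tsum_le_tsum h1
      _ = ENNReal.ofReal (C₁ * Real.exp (-d * N) / (1 - Real.exp (-d))) :=
          stmt14_geom _ _ (by positivity) (Real.exp_nonneg _) hed1
  -- assemble the integral bound
  have hIle : (∫⁻ z in S, (σ z : ℝ≥0∞) ∂μ) ≤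
      ENNReal.ofReal ((N:ℝ) * ((N:ℝ) * (C₂' * (t / N) ^ (-β₀)) + C₁ * Real.exp (-d * N))
        + C₁ * Real.exp (-d * N) / (1 - Real.exp (-d))) := by
    rw [hI]
    rw [← Summable.sum_add_tsum_nat_add' (f := fun n => μ ({w | n < σ w} ∩ S)) (k := N)
      ENNReal.summable]
    have hfin : (∑ n ∈ Finset.range N, μ ({w | n < σ w} ∩ S)) ≤
        ENNReal.ofReal ((N:ℝ) * ((N:ℝ) * (C₂' * (t / N) ^ (-β₀)) + C₁ * Real.exp (-d * N))) := by
      calc (∑ n ∈ Finset.range N, μ ({w | n < σ w} ∩ S))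
          ≤ ∑ _n ∈ Finset.range N,
              ENNReal.ofReal ((N:ℝ) * (C₂' * (t / N) ^ (-β₀)) + C₁ * Real.exp (-d * N)) :=
            Finset.sum_le_sum fun n _ => hterm n
        _ = (N : ℝ≥0∞) * ENNReal.ofReal ((N:ℝ) * (C₂' * (t / N) ^ (-β₀))
              + C₁ * Real.exp (-d * N)) := by
            rw [Finset.sum_const, Finset.card_range, nsmul_eq_mul]
        _ = _ := by
            rw [← ENNReal.ofReal_natCast N, ← ENNReal.ofReal_mul (Nat.cast_nonneg N)]
    calc (∑ n ∈ Finset.range N, μ ({w | n < σ w} ∩ S))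
          + ∑' n : ℕ, μ ({w | (n + N) < σ w} ∩ S)
        ≤ ENNReal.ofReal ((N:ℝ) * ((N:ℝ) * (C₂' * (t / N) ^ (-β₀)) + C₁ * Real.exp (-d * N)))
          + ENNReal.ofReal (C₁ * Real.exp (-d * N) / (1 - Real.exp (-d))) :=
          add_le_add hfin htail
      _ = _ := by rw [← ENNReal.ofReal_add (by positivity) (by positivity)]
  -- the real-number bound
  have hreal : (N:ℝ) * ((N:ℝ) * (C₂' * (t / N) ^ (-β₀)) + C₁ * Real.exp (-d * N))
      + C₁ * Real.exp (-d * N) / (1 - Real.exp (-d))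
      ≤ (C₂' * K ^ 2 * K ^ β₀ + C₁ * K + C₁ / (1 - Real.exp (-d))) * t ^ (-γ) := by
    have htγpos : (0:ℝ) < t ^ (-γ) := Real.rpow_pos_of_pos htpos _
    have hdivpow : (t / N) ^ (-β₀) = (N:ℝ) ^ β₀ * t ^ (-β₀) := by
      rw [Real.rpow_neg (by positivity), Real.div_rpow htpos.le (Nat.cast_nonneg N),
        inv_div, Real.rpow_neg htpos.le, div_eq_mul_inv]
    have htβ0 : (0:ℝ) ≤ t ^ (-β₀) := Real.rpow_nonneg htpos.le _
    -- main polynomial term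
    have hmain : (N:ℝ) * ((N:ℝ) * (C₂' * ((t / N) ^ (-β₀))))
        ≤ C₂' * K ^ 2 * K ^ β₀ * t ^ (-γ) := by
      have e1 : (N:ℝ) ^ 2 ≤ (K * t ^ δ) ^ 2 := pow_le_pow_left₀ (Nat.cast_nonneg N) hNle 2
      have e2 : (N:ℝ) ^ β₀ ≤ (K * t ^ δ) ^ β₀ :=
        Real.rpow_le_rpow (Nat.cast_nonneg N) hNle hβ₀.le
      have key : (N:ℝ) ^ 2 * (N:ℝ) ^ β₀ * t ^ (-β₀) ≤ K ^ 2 * K ^ β₀ * t ^ (-γ) := by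
        calc (N:ℝ) ^ 2 * (N:ℝ) ^ β₀ * t ^ (-β₀)
            ≤ (K * t ^ δ) ^ 2 * (K * t ^ δ) ^ β₀ * t ^ (-β₀) := by
              have hN20 : (0:ℝ) ≤ (N:ℝ) ^ 2 := by positivity
              have hNβ0 : (0:ℝ) ≤ (N:ℝ) ^ β₀ := Real.rpow_nonneg (Nat.cast_nonneg N) _
              have h20 : (0:ℝ) ≤ (K * t ^ δ) ^ 2 := by positivity
              exact mul_le_mul (mul_le_mul e1 e2 hNβ0 h20) le_rfl htβ0 (by positivity)
          _ = K ^ 2 * K ^ β₀ * t ^ (-γ) := by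
              rw [mul_pow, Real.mul_rpow hKpos.le htδpos.le]
              have h2 : (t ^ δ) ^ (2:ℕ) = t ^ (δ * 2) := by
                rw [← Real.rpow_natCast (t ^ δ) 2, ← Real.rpow_mul htpos.le]
                norm_num
              have h3 : (t ^ δ) ^ β₀ = t ^ (δ * β₀) := (Real.rpow_mul htpos.le δ β₀).symm
              rw [h2, h3]
              have h4 : t ^ (δ * 2) * t ^ (δ * β₀) * t ^ (-β₀) = t ^ (-γ) := by
                rw [← Real.rpow_add htpos, ← Real.rpow_add htpos]
                congr 1
                linear_combination hδeq
              calc K ^ 2 * t ^ (δ * 2) * (K ^ β₀ * t ^ (δ * β₀)) * t ^ (-β₀)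
                  = K ^ 2 * K ^ β₀ * (t ^ (δ * 2) * t ^ (δ * β₀) * t ^ (-β₀)) := by ring
                _ = K ^ 2 * K ^ β₀ * t ^ (-γ) := by rw [h4]
      calc (N:ℝ) * ((N:ℝ) * (C₂' * ((t / N) ^ (-β₀))))
          = C₂' * ((N:ℝ) ^ 2 * (N:ℝ) ^ β₀ * t ^ (-β₀)) := by rw [hdivpow]; ring
        _ ≤ C₂' * (K ^ 2 * K ^ β₀ * t ^ (-γ)) := mul_le_mul_of_nonneg_left key hC₂'pos.le
        _ = C₂' * K ^ 2 * K ^ β₀ * t ^ (-γ) := by ring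
    -- second term
    have h6 : t ^ (-(γ + 1)) = t ^ (-γ) * t⁻¹ := by
      rw [show -(γ + 1) = -γ + (-1) by ring, Real.rpow_add htpos, Real.rpow_neg_one]
    have hterm2 : (N:ℝ) * (C₁ * Real.exp (-d * N)) ≤ C₁ * K * t ^ (-γ) := by
      have h7 : C₁ * Real.exp (-d * N) ≤ C₁ * (t ^ (-γ) * t⁻¹) :=
        mul_le_mul_of_nonneg_left (hexpN.trans_eq h6) hC₁.le
      have h8 : (N:ℝ) * (C₁ * Real.exp (-d * N)) ≤ (K * t) * (C₁ * (t ^ (-γ) * t⁻¹)) := by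
        apply mul_le_mul hNt h7 (by positivity) (by positivity)
      have h9 : (K * t) * (C₁ * (t ^ (-γ) * t⁻¹)) = C₁ * K * t ^ (-γ) := by
        field_simp
      linarith
    -- third term
    have hterm3 : C₁ * Real.exp (-d * N) / (1 - Real.exp (-d))
        ≤ C₁ / (1 - Real.exp (-d)) * t ^ (-γ) := by
      have h10 : C₁ * Real.exp (-d * N) ≤ C₁ * t ^ (-γ) :=
        mul_le_mul_of_nonneg_left (hexpN.trans htneg) hC₁.le
      have h11 : C₁ * Real.exp (-d * N) / (1 - Real.exp (-d))
          ≤ C₁ * t ^ (-γ) / (1 - Real.exp (-d)) := by gcongr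
      have h12 : C₁ * t ^ (-γ) / (1 - Real.exp (-d))
          = C₁ / (1 - Real.exp (-d)) * t ^ (-γ) := by ring
      linarith
    nlinarith [hmain, hterm2, hterm3]
  refine ⟨hIle.trans (ENNReal.ofReal_le_ofReal hreal), ?_⟩
  have hμS : μ S ≤ ∫⁻ z in S, (σ z : ℝ≥0∞) ∂μ := by
    have h12 : μ S = ∫⁻ _z in S, (1:ℝ≥0∞) ∂μ := by rw [setLIntegral_one]
    rw [h12]
    exact lintegral_mono fun z => by exact (show (1:ℝ≥0∞) ≤ σ z by exact_mod_cast hσ1 z)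
  exact hμS.trans (hIle.trans (ENNReal.ofReal_le_ofReal hreal))
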